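/- Under the assumptions of the DCAe descent lemma, if the extrapolation points y^k satisfy (L + l)·D_φ(x^k, y^k) ≤ δ·L·D_φ(x^{k−1}, x^k) with δ ∈ (0,1), then for every k ≥ 0: F(x^{k+1}) ≤ F(x^k) + δL·D_φ(x^{k−1}, x^k) − L·D_φ(x^k, x^{k+1}). -/

import Mathlib

open Filter Topology

/-- Bregman distance associated with `φ`. -/
noncomputable def Dphi {E : Type*} [NormedAddCommGroup E] [InnerProductSpace ℝ E]
    [CompleteSpace E] (φ : E → ℝ) (x y : E) : ℝ :=
  φ x - φ y - (inner ℝ (gradient φ y) (x - y) : ℝ)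

/-- Convex subdifferential of `h` at `x`. -/
def ConvexSubdiff {E : Type*} [NormedAddCommGroup E] [InnerProductSpace ℝ E]
    (h : E → ℝ) (x : E) : Set E :=
  {ξ | ∀ z, h x + (inner ℝ ξ (z - x) : ℝ) ≤ h z}

private lemma slope_le_of_le {ψ : ℝ → ℝ} {d c : ℝ} (hd : HasDerivAt ψ d 0)
    (h : ∀ t ∈ Set.Ioc (0:ℝ) 1, ψ t - ψ 0 ≤ c * t) : d ≤ c := by
  have hs : Tendsto (slope ψ 0) (𝓝[>] (0:ℝ)) (𝓝 d) :=
    (hasDerivAt_iff_tendsto_slope.mp hd).mono_left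
      (nhdsWithin_mono _ (fun t ht => ne_of_gt ht))
  refine le_of_tendsto hs ?_
  filter_upwards [Ioc_mem_nhdsGT (by norm_num : (0:ℝ) < 1)] with t ht
  have ht0 : (0:ℝ) < t := ht.1
  rw [slope_def_field, sub_zero, div_le_iff₀ ht0]
  linarith [h t ht]

private lemma le_slope_of_le {ψ : ℝ → ℝ} {d c : ℝ} (hd : HasDerivAt ψ d 0)
    (h : ∀ t ∈ Set.Ioc (0:ℝ) 1, c * t ≤ ψ t - ψ 0) : c ≤ d := by
  have := slope_le_of_le (ψ := fun t => -ψ t) (d := -d) (c := -c) hd.neg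
    (fun t ht => by have := h t ht; linarith)
  linarith

private lemma line_hasDerivAt {E : Type*} [NormedAddCommGroup E] [InnerProductSpace ℝ E]
    (u : E → ℝ) (a v : E) (hu : DifferentiableAt ℝ u a) :
    HasDerivAt (fun t : ℝ => u (a + t • v)) (fderiv ℝ u a v) 0 := by
  have h1 : HasDerivAt (fun t : ℝ => a + t • v) v 0 := by
    simpa using ((hasDerivAt_id (0:ℝ)).smul_const v).const_add a
  have ha : a + (0:ℝ) • v = a := by simp
  rw [← ha] at hu
  have h2 := hu.hasFDerivAt.comp_hasDerivAt (f := fun t : ℝ => a + t • v) 0 h1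
  simp [ha] at h2
  exact h2

private lemma convex_grad_le {E : Type*} [NormedAddCommGroup E] [InnerProductSpace ℝ E]
    (u : E → ℝ) (hu : ConvexOn ℝ Set.univ u) (a w : E) (hd : DifferentiableAt ℝ u a) :
    u a + fderiv ℝ u a (w - a) ≤ u w := by
  have hψ := line_hasDerivAt u a (w - a) hd
  have key : fderiv ℝ u a (w - a) ≤ u w - u a := by
    refine slope_le_of_le hψ (fun t ht => ?_)
    have hc : a + t • (w - a) = (1 - t) • a + t • w := by module
    have := hu.2 (Set.mem_univ a) (Set.mem_univ w) (by linarith [ht.2] : (0:ℝ) ≤ 1 - t)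
      ht.1.le (by ring)
    simp only [hc, smul_eq_mul] at this ⊢
    simp only [zero_smul, add_zero]
    nlinarith [this]
  linarith

private lemma min_grad_le {E : Type*} [NormedAddCommGroup E] [InnerProductSpace ℝ E]
    (φ g : E → ℝ) (L : ℝ) (hL : 0 < L) (p b w : E)
    (hφd : DifferentiableAt ℝ φ b) (hg : ConvexOn ℝ Set.univ g)
    (hmin : ∀ z, L * φ b + g b - (inner ℝ p b : ℝ) ≤ L * φ z + g z - (inner ℝ p z : ℝ)) :
    (inner ℝ p (w - b) : ℝ) ≤ L * fderiv ℝ φ b (w - b) + g w - g b := by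
  have hψ : HasDerivAt (fun t : ℝ => L * φ (b + t • (w - b))) (L * fderiv ℝ φ b (w - b)) 0 :=
    (line_hasDerivAt φ b (w - b) hφd).const_mul L
  have key : (inner ℝ p (w - b) : ℝ) - (g w - g b) ≤ L * fderiv ℝ φ b (w - b) := by
    refine le_slope_of_le hψ (fun t ht => ?_)
    set z := b + t • (w - b) with hz
    have hc : z = (1 - t) • b + t • w := by rw [hz]; module
    have hgz : g z ≤ (1 - t) * g b + t * g w := by
      rw [hc]
      simpa using hg.2 (Set.mem_univ b) (Set.mem_univ w)
        (by linarith [ht.2] : (0:ℝ) ≤ 1 - t) ht.1.le (by ring)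
    have hip : (inner ℝ p z : ℝ) = (inner ℝ p b : ℝ) + t * (inner ℝ p (w - b) : ℝ) := by
      rw [hz, inner_add_right, real_inner_smul_right]
    have h0 := hmin z
    simp only [zero_smul, add_zero]
    nlinarith [h0, hgz, hip]
  linarith

private lemma inner_gradient_eq {E : Type*} [NormedAddCommGroup E] [InnerProductSpace ℝ E]
    [CompleteSpace E] (u : E → ℝ) (yy v : E) :
    (inner ℝ (gradient u yy) v : ℝ) = fderiv ℝ u yy v := by
  rw [gradient]
  exact InnerProductSpace.toDual_symm_apply

theorem stmt4 {E : Type*} [NormedAddCommGroup E] [InnerProductSpace ℝ E]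
    [FiniteDimensional ℝ E]
    (f g h φ : E → ℝ) (L l ρ δ : ℝ) (hL : 0 < L) (hl : 0 ≤ l) (hρ : 0 < ρ)
    (hδ : δ ∈ Set.Ioo (0 : ℝ) 1)
    (hf : ContDiff ℝ 1 f) (hφ : ContDiff ℝ 1 φ)
    (hφsc : ConvexOn ℝ Set.univ (fun x => φ x - ρ / 2 * ‖x‖ ^ 2))
    (hLf : ConvexOn ℝ Set.univ (fun x => L * φ x - f x))
    (hlf : ConvexOn ℝ Set.univ (fun x => l * φ x + f x))
    (hg : ConvexOn ℝ Set.univ g) (hglsc : LowerSemicontinuous g)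
    (hh : ConvexOn ℝ Set.univ h)
    (x y ξ : ℕ → E) (β : ℕ → ℝ)
    (hy : ∀ k, y k = x k + β k • (x k - x (k - 1)))
    (hext : ∀ k, (L + l) * Dphi φ (x k) (y k) ≤ δ * L * Dphi φ (x (k - 1)) (x k))
    (hξ : ∀ k, ξ k ∈ ConvexSubdiff h (x k))
    (hmin : ∀ k, ∀ z : E,
      L * φ (x (k + 1)) + g (x (k + 1))
          - (inner ℝ (L • gradient φ (y k) - gradient f (y k) + ξ k) (x (k + 1)) : ℝ)
        ≤ L * φ z + g z
          - (inner ℝ (L • gradient φ (y k) - gradient f (y k) + ξ k) z : ℝ)) :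
    ∀ k : ℕ,
      f (x (k + 1)) + g (x (k + 1)) - h (x (k + 1))
        ≤ (f (x k) + g (x k) - h (x k))
          + δ * L * Dphi φ (x (k - 1)) (x k) - L * Dphi φ (x k) (x (k + 1)) := by
  intro k
  have hφd : Differentiable ℝ φ := hφ.differentiable one_ne_zero
  have hfd : Differentiable ℝ f := hf.differentiable one_ne_zero
  set a := x k with ha
  set b := x (k + 1) with hb
  set w := y k with hw
  set c := x (k - 1) with hc
  have e1 : ∀ v : E, fderiv ℝ (fun z => L * φ z - f z) w v
      = L * fderiv ℝ φ w v - fderiv ℝ f w v := by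
    intro v
    rw [fderiv_fun_sub ((hφd w).const_mul L) (hfd w), fderiv_const_mul (hφd w)]
    simp
  have e2 : ∀ v : E, fderiv ℝ (fun z => l * φ z + f z) w v
      = l * fderiv ℝ φ w v + fderiv ℝ f w v := by
    intro v
    rw [fderiv_fun_add ((hφd w).const_mul l) (hfd w), fderiv_const_mul (hφd w)]
    simp
  have hd1 : DifferentiableAt ℝ (fun z => L * φ z - f z) w := ((hφd w).const_mul L).sub (hfd w)
  have hd2 : DifferentiableAt ℝ (fun z => l * φ z + f z) w := ((hφd w).const_mul l).add (hfd w)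
  have h1 := convex_grad_le _ hLf w b hd1
  have h2 := convex_grad_le _ hlf w a hd2
  rw [e1] at h1
  rw [e2] at h2
  have h3 := hξ k b
  rw [← ha] at h3
  set p := L • gradient φ w - gradient f w + ξ k with hp
  have h4 := min_grad_le φ g L hL p b a (hφd b) hg (hmin k)
  -- expand inner p (a - b)
  have hab : (a : E) - b = (a - w) - (b - w) := by abel
  have hpe : (inner ℝ p (a - b) : ℝ)
      = L * (fderiv ℝ φ w (a - w) - fderiv ℝ φ w (b - w))
        - (fderiv ℝ f w (a - w) - fderiv ℝ f w (b - w)) + (inner ℝ (ξ k) (a - b) : ℝ) := by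
    rw [hp, inner_add_left, inner_sub_left, real_inner_smul_left,
      inner_gradient_eq, inner_gradient_eq, hab]
    simp only [map_sub]
  rw [hpe] at h4
  have hS : (inner ℝ (ξ k) (b - a) : ℝ) = - (inner ℝ (ξ k) (a - b) : ℝ) := by
    rw [show (b : E) - a = -(a - b) by abel, inner_neg_right]
  rw [hS] at h3
  have h5 := hext k
  simp only [← ha, ← hb, ← hw, ← hc] at h5
  simp only [Dphi, inner_gradient_eq] at h5 ⊢
  linarith [h1, h2, h3, h4, h5]
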